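/- Let H be a real Hilbert space and f: H → ℝ ∪ {+∞} proper, lsc, convex with dom f = dom ∂f. Then f is strictly convex if and only if ∂f is strictly monotone. -/
import Mathlib
set_option linter.unusedSectionVars false


open scoped InnerProductSpace

variable {H : Type*} [NormedAddCommGroup H] [InnerProductSpace ℝ H] [CompleteSpace H]

/-- `f` is proper: not identically `⊤` and never `⊥`. -/
def IsProperFn (f : H → EReal) : Prop := (∃ x, f x ≠ ⊤) ∧ ∀ x, f x ≠ ⊥

/-- `f` is convex (as an extended-real-valued function). -/
def IsConvexFn (f : H → EReal) : Prop :=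
  ∀ x y : H, ∀ t : ℝ, 0 < t → t < 1 →
    f ((1 - t) • x + t • y) ≤ ((1 - t : ℝ) : EReal) * f x + ((t : ℝ) : EReal) * f y

/-- `f` is strictly convex on the set `s`. -/
def StrictConvexOnSet (f : H → EReal) (s : Set H) : Prop :=
  ∀ x ∈ s, ∀ y ∈ s, x ≠ y → ∀ t : ℝ, 0 < t → t < 1 →
    f ((1 - t) • x + t • y) < ((1 - t : ℝ) : EReal) * f x + ((t : ℝ) : EReal) * f y

/-- The effective domain of `f`. -/
def domFn (f : H → EReal) : Set H := {x | f x ≠ ⊤}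

/-- `f` is strictly convex (on its domain). -/
def IsStrictConvexFn (f : H → EReal) : Prop := StrictConvexOnSet f (domFn f)

/-- The convex subdifferential of `f` at `x`. -/
def subdiff (f : H → EReal) (x : H) : Set H :=
  {v | ∀ y : H, f x + ((⟪v, y - x⟫_ℝ : ℝ) : EReal) ≤ f y}

/-- The domain of the subdifferential. -/
def domSubdiff (f : H → EReal) : Set H := {x | (subdiff f x).Nonempty}

/-- `f` is almost strictly convex: strictly convex along every line segment in `dom ∂f`. -/
def AlmostStrictlyConvex (f : H → EReal) : Prop :=
  ∀ x₀ x₁ : H, x₀ ≠ x₁ → segment ℝ x₀ x₁ ⊆ domSubdiff f →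
    StrictConvexOnSet f (segment ℝ x₀ x₁)

/-- `∂f` is strictly monotone. -/
def StrictlyMonotoneSubdiff (f : H → EReal) : Prop :=
  ∀ x₀ x₁ v₀ v₁ : H, v₀ ∈ subdiff f x₀ → v₁ ∈ subdiff f x₁ → x₀ ≠ x₁ →
    0 < ⟪v₀ - v₁, x₀ - x₁⟫_ℝ

section Aux

variable {H : Type*} [NormedAddCommGroup H] [InnerProductSpace ℝ H] [CompleteSpace H]

lemma ne_top_of_subdiff {f : H → EReal} (hp : IsProperFn f) {x v : H}
    (hv : v ∈ subdiff f x) : f x ≠ ⊤ := by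
  obtain ⟨y, hy⟩ := hp.1
  intro h
  apply hy
  have := hv y
  rw [h, EReal.top_add_coe] at this
  exact top_le_iff.mp this

lemma fx_eq_coe {f : H → EReal} (hp : IsProperFn f) {x : H} (hx : f x ≠ ⊤) :
    f x = ((f x).toReal : EReal) := (EReal.coe_toReal hx (hp.2 x)).symm

lemma subdiff_real {f : H → EReal} {x y v : H} (hv : v ∈ subdiff f x) {a b : ℝ}
    (hx : f x = (a : EReal)) (hy : f y = (b : EReal)) :
    a + ⟪v, y - x⟫_ℝ ≤ b := by
  have := hv y
  rw [hx, hy] at this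
  exact_mod_cast this

lemma conv_real {f : H → EReal} (hp : IsProperFn f) (hc : IsConvexFn f) {x y : H} {a b t : ℝ}
    (hx : f x = (a : EReal)) (hy : f y = (b : EReal)) (ht0 : 0 < t) (ht1 : t < 1) :
    f ((1 - t) • x + t • y) ≠ ⊤ ∧
      (f ((1 - t) • x + t • y)).toReal ≤ (1 - t) * a + t * b := by
  have h := hc x y t ht0 ht1
  rw [hx, hy] at h
  have h' : f ((1 - t) • x + t • y) ≤ (((1 - t) * a + t * b : ℝ) : EReal) := by
    refine h.trans_eq ?_
    push_cast
    ring
  have hne : f ((1 - t) • x + t • y) ≠ ⊤ := fun hT => by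
    rw [hT] at h'; exact (EReal.coe_lt_top _).not_ge h'
  refine ⟨hne, ?_⟩
  have := fx_eq_coe hp hne
  rw [this] at h'
  exact_mod_cast h'

/-- If `f` is affine on the chord at `z s`, any subgradient there has slope `b - a`. -/
lemma pinch {f : H → EReal} {x y v : H} {a b s : ℝ}
    (hx : f x = (a : EReal)) (hy : f y = (b : EReal))
    (hzs : f ((1 - s) • x + s • y) = (((1 - s) * a + s * b : ℝ) : EReal))
    (hv : v ∈ subdiff f ((1 - s) • x + s • y)) (hs0 : 0 < s) (hs1 : s < 1) :
    ⟪v, y - x⟫_ℝ = b - a := by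
  set z := (1 - s) • x + s • y with hz
  have h1 : y - z = (1 - s) • (y - x) := by rw [hz]; module
  have h2 : x - z = (-s) • (y - x) := by rw [hz]; module
  have hy' := subdiff_real hv hzs hy
  have hx' := subdiff_real hv hzs hx
  rw [h1, real_inner_smul_right] at hy'
  rw [h2, real_inner_smul_right] at hx'
  set I := ⟪v, y - x⟫_ℝ
  nlinarith [hy', hx']

end Aux

theorem stmt13 (f : H → EReal) (hp : IsProperFn f) (hlsc : LowerSemicontinuous f)
    (hc : IsConvexFn f) (hdom : domFn f = domSubdiff f) :
    IsStrictConvexFn f ↔ StrictlyMonotoneSubdiff f := by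
  constructor
  · -- strict convexity → strict monotonicity
    intro hsc x₀ x₁ v₀ v₁ hv₀ hv₁ hne
    have hT₀ : f x₀ ≠ ⊤ := ne_top_of_subdiff hp hv₀
    have hT₁ : f x₁ ≠ ⊤ := ne_top_of_subdiff hp hv₁
    set a₀ := (f x₀).toReal with ha₀def
    set a₁ := (f x₁).toReal with ha₁def
    have ha₀ : f x₀ = (a₀ : EReal) := fx_eq_coe hp hT₀
    have ha₁ : f x₁ = (a₁ : EReal) := fx_eq_coe hp hT₁
    have hmid := hsc x₀ hT₀ x₁ hT₁ hne (1/2) (by norm_num) (by norm_num)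
    rw [ha₀, ha₁] at hmid
    set m := (1 - 1/2 : ℝ) • x₀ + (1/2 : ℝ) • x₁ with hmdef
    have hmid' : f m < (((1 - 1/2) * a₀ + (1/2) * a₁ : ℝ) : EReal) := by
      refine hmid.trans_eq ?_
      push_cast
      ring
    have hmT : f m ≠ ⊤ := by
      intro hT
      rw [hT] at hmid'
      exact absurd hmid' (not_lt.mpr le_top)
    have hmc : f m = (((f m).toReal : ℝ) : EReal) := fx_eq_coe hp hmT
    set c := (f m).toReal
    have hclt : c < (1 - 1/2) * a₀ + (1/2) * a₁ := by
      rw [hmc] at hmid'; exact_mod_cast hmid'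
    have h₀ := subdiff_real hv₀ ha₀ hmc
    have h₁ := subdiff_real hv₁ ha₁ hmc
    have e₀ : m - x₀ = (1/2 : ℝ) • (x₁ - x₀) := by rw [hmdef]; module
    have e₁ : m - x₁ = (-(1/2) : ℝ) • (x₁ - x₀) := by rw [hmdef]; module
    rw [e₀, real_inner_smul_right] at h₀
    rw [e₁, real_inner_smul_right] at h₁
    have efin : ⟪v₀ - v₁, x₀ - x₁⟫_ℝ =
        -(⟪v₀, x₁ - x₀⟫_ℝ - ⟪v₁, x₁ - x₀⟫_ℝ) := by
      have : x₀ - x₁ = (-1 : ℝ) • (x₁ - x₀) := by module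
      rw [this, real_inner_smul_right, inner_sub_left]
      ring
    rw [efin]
    linarith
  · -- strict monotonicity → strict convexity
    intro hm x hx y hy hxy t ht0 ht1
    have hxT : f x ≠ ⊤ := hx
    have hyT : f y ≠ ⊤ := hy
    set a := (f x).toReal with hadef
    set b := (f y).toReal with hbdef
    have ha : f x = (a : EReal) := fx_eq_coe hp hxT
    have hb : f y = (b : EReal) := fx_eq_coe hp hyT
    by_contra hcon
    push_neg at hcon
    -- equality at t
    have hconv := conv_real hp hc ha hb ht0 ht1
    have hztT := hconv.1
    have hzt : f ((1 - t) • x + t • y) = (((f ((1 - t) • x + t • y)).toReal : ℝ) : EReal) :=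
      fx_eq_coe hp hztT
    set ct := (f ((1 - t) • x + t • y)).toReal with hctdef
    have hctle : ct ≤ (1 - t) * a + t * b := hconv.2
    have hctge : (1 - t) * a + t * b ≤ ct := by
      rw [hzt, ha, hb] at hcon
      have : (((1 - t) * a + t * b : ℝ) : EReal) ≤ ((ct : ℝ) : EReal) := by
        refine le_trans (le_of_eq ?_) hcon
        push_cast; ring
      exact_mod_cast this
    have hcteq : ct = (1 - t) * a + t * b := le_antisymm hctle hctge
    -- equality at t/2
    have ht20 : (0 : ℝ) < t / 2 := by linarith
    have ht21 : t / 2 < 1 := by linarith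
    have hconv2 := conv_real hp hc ha hb ht20 ht21
    have hzsT := hconv2.1
    have hzs : f ((1 - t / 2) • x + (t / 2) • y) =
        (((f ((1 - t / 2) • x + (t / 2) • y)).toReal : ℝ) : EReal) := fx_eq_coe hp hzsT
    set cs := (f ((1 - t / 2) • x + (t / 2) • y)).toReal with hcsdef
    have hcsle : cs ≤ (1 - t / 2) * a + (t / 2) * b := hconv2.2
    -- z t is a convex combination of z (t/2) and y with weight u = t/(2-t)
    set u := t / (2 - t) with hudef
    have h2t : (0 : ℝ) < 2 - t := by linarith
    have hu0 : 0 < u := div_pos ht0 h2t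
    have hu1 : u < 1 := (div_lt_one h2t).mpr (by linarith)
    have hcomb : (1 - t) • x + t • y =
        (1 - u) • ((1 - t / 2) • x + (t / 2) • y) + u • y := by
      rw [hudef]
      match_scalars <;> field_simp <;> ring
    have hconv3 := conv_real hp hc hzs hb hu0 hu1
    rw [← hcomb] at hconv3
    have hkey : ct ≤ (1 - u) * cs + u * b := by
      rw [← hctdef] at hconv3
      exact hconv3.2
    have h3 : (2 - t) * (1 - u) = 2 - 2 * t := by rw [hudef]; field_simp; ring
    have h4 : (2 - t) * u = t := by rw [hudef]; field_simp
    have hkey2 : (2 - t) * ((1 - t) * a + t * b) ≤ (2 - 2 * t) * cs + t * b := by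
      have h5 := mul_le_mul_of_nonneg_left hkey h2t.le
      rw [hcteq] at h5
      calc (2 - t) * ((1 - t) * a + t * b) ≤ (2 - t) * ((1 - u) * cs + u * b) := h5
        _ = ((2 - t) * (1 - u)) * cs + ((2 - t) * u) * b := by ring
        _ = (2 - 2 * t) * cs + t * b := by rw [h3, h4]
    have hcsge : (1 - t / 2) * a + (t / 2) * b ≤ cs := by
      have h6 : (2 - 2 * t) * ((1 - t / 2) * a + (t / 2) * b) ≤ (2 - 2 * t) * cs := by
        nlinarith [hkey2]
      exact le_of_mul_le_mul_left h6 (by linarith)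
    have hcseq : cs = (1 - t / 2) * a + (t / 2) * b := le_antisymm hcsle hcsge
    -- subgradients at z t and z (t/2)
    have hvt : ((1 - t) • x + t • y) ∈ domSubdiff f := hdom ▸ hztT
    have hvs : ((1 - t / 2) • x + (t / 2) • y) ∈ domSubdiff f := hdom ▸ hzsT
    obtain ⟨vt, hvt'⟩ := hvt
    obtain ⟨vs, hvs'⟩ := hvs
    have hzt' : f ((1 - t) • x + t • y) = (((1 - t) * a + t * b : ℝ) : EReal) := by
      rw [hzt, hcteq]
    have hzs' : f ((1 - t / 2) • x + (t / 2) • y) =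
        (((1 - t / 2) * a + (t / 2) * b : ℝ) : EReal) := by
      rw [hzs, hcseq]
    have hpt := pinch ha hb hzt' hvt' ht0 ht1
    have hps := pinch ha hb hzs' hvs' ht20 ht21
    have hnediff : ((1 - t) • x + t • y) ≠ ((1 - t / 2) • x + (t / 2) • y) := by
      intro h
      apply hxy
      have h' : ((1 - t) • x + t • y) - ((1 - t / 2) • x + (t / 2) • y) = 0 := sub_eq_zero.mpr h
      have h'' : (t / 2 : ℝ) • (y - x) = 0 := by rw [← h']; module
      have := (smul_eq_zero.mp h'').resolve_left (by positivity)
      exact (sub_eq_zero.mp this).symm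
    have hmon := hm _ _ _ _ hvt' hvs' hnediff
    have hvec : ((1 - t) • x + t • y) - ((1 - t / 2) • x + (t / 2) • y) =
        (t / 2 : ℝ) • (y - x) := by module
    rw [hvec, real_inner_smul_right, inner_sub_left, hpt, hps] at hmon
    simp at hmon
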